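/- If a profile with an odd number of voters is single-peaked on a tree T (with vertex set equal to the alternatives), then it has a Condorcet winner; specifically, orienting each edge of T according to the majority preference yields an acyclic digraph whose source vertex is a Condorcet winner. -/

import Mathlib

/-- A vote (linear order) over a finite set `A`, encoded as a ranking:
`v a < v b` means `a` is strictly preferred to `b`. -/
abbrev Vote (A : Type*) [Fintype A] := A ≃ Fin (Fintype.card A)

variable {A : Type*} [Fintype A] [DecidableEq A] [Nonempty A]

/-- The top-ranked (most preferred) alternative of a vote. -/
def top (v : Vote A) : A := v.symm ⟨0, Fintype.card_pos⟩

/-- `v` is single-peaked on the graph `G` (thought of as a tree on the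
alternatives): whenever `a` lies on a path in `G` from `top v` to `b`
(with `a ≠ b`), the vote ranks `a` above `b`. -/
def SinglePeakedOnTree (G : SimpleGraph A) (v : Vote A) : Prop :=
  ∀ a b : A, a ≠ b →
    (∃ p : G.Walk (top v) b, p.IsPath ∧ a ∈ p.support) → v a < v b

/-- The strict majority relation. -/
def strictMaj {n : ℕ} (P : Fin n → Vote A) (a b : A) : Prop :=
  (Finset.univ.filter fun i => P i b < P i a).card <
  (Finset.univ.filter fun i => P i a < P i b).card

/-- `c` is a (strong) Condorcet winner. -/
def StrongCondorcetWinner {n : ℕ} (P : Fin n → Vote A) (c : A) : Prop :=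
  ∀ b : A, b ≠ c → strictMaj P c b

section Aux

open SimpleGraph Finset

variable {G : SimpleGraph A}

/-- In a tree, paths between two vertices are unique. -/
private lemma tree_path_eq (hT : G.IsTree) {u v : A} {p q : G.Walk u v}
    (hp : p.IsPath) (hq : q.IsPath) : p = q := by
  have := hT.IsAcyclic.path_unique ⟨p, hp⟩ ⟨q, hq⟩
  exact congrArg Subtype.val this

/-- In a tree, the path between two vertices is contained in any walk between them. -/
private lemma tree_path_support_subset (hT : G.IsTree) {u v : A} {p : G.Walk u v}
    (hp : p.IsPath) (w : G.Walk u v) : p.support ⊆ w.support := by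
  have h : p = w.bypass := tree_path_eq hT hp w.bypass_isPath
  rw [h]; exact w.support_bypass_subset

/-- Tree separation fact: if `a` lies on the path `c → b` and `a` is not on the
path `t → b`, then `a` is on the path `t → c`. -/
private lemma tree_F2 (hT : G.IsTree) {c a b t : A}
    {pcb : G.Walk c b} (hpcb : pcb.IsPath) (ha : a ∈ pcb.support)
    {ptb : G.Walk t b} (hna : a ∉ ptb.support)
    {ptc : G.Walk t c} (hptc : ptc.IsPath) : a ∈ ptc.support := by
  by_contra hn
  have hsub := tree_path_support_subset hT hpcb (ptc.reverse.append ptb)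
  have hmem := hsub ha
  rw [Walk.mem_support_append_iff] at hmem
  rcases hmem with h | h
  · rw [Walk.support_reverse, List.mem_reverse] at h; exact hn h
  · exact hna h

/-- Tree separation fact: if `a` is adjacent to `c` and lies on the path `c → b`,
and `c` is not on the path `t → b`, then `a` is on the path `t → c`. -/
private lemma tree_F1 (hT : G.IsTree) {c a b t : A} (hca : G.Adj c a)
    {pcb : G.Walk c b} (hpcb : pcb.IsPath) (ha : a ∈ pcb.support)
    {ptb : G.Walk t b} (hnc : c ∉ ptb.support)
    {ptc : G.Walk t c} (hptc : ptc.IsPath) : a ∈ ptc.support := by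
  classical
  -- the segment of `pcb` from `a` to `b` avoids `c`
  set q := pcb.dropUntil a ha with hqdef
  have hcq : c ∉ q.support := by
    intro hc
    have hspec := pcb.take_spec ha
    have hnodup := hpcb.support_nodup
    rw [← hspec, Walk.support_append] at hnodup
    have hdisj := (List.nodup_append'.mp hnodup).2.2
    have hc' : c ∈ q.support.tail := by
      have hca' : c ≠ a := hca.ne
      have : c ∈ a :: q.support.tail := by
        rw [← Walk.support_eq_cons]; exact hc
      rcases this with _ | h
      · exact absurd rfl hca'
      · assumption
    exact hdisj (Walk.start_mem_support _) hc'
  -- a walk from `a` to `t` avoiding `c`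
  have hcw : c ∉ (q.append ptb.reverse).support := by
    intro hc
    rw [Walk.mem_support_append_iff] at hc
    rcases hc with h | h
    · exact hcq h
    · rw [Walk.support_reverse, List.mem_reverse] at h; exact hnc h
  set pat := (q.append ptb.reverse).bypass with hpatdef
  have hcpat : c ∉ pat.support := fun hc => hcw ((q.append ptb.reverse).support_bypass_subset hc)
  have hnew : (Walk.cons hca pat).IsPath :=
    Walk.IsPath.cons ((q.append ptb.reverse).bypass_isPath) hcpat
  have heq : ptc.reverse = Walk.cons hca pat := tree_path_eq hT hptc.reverse hnew
  have hmem : a ∈ ptc.reverse.support := by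
    rw [heq, Walk.support_cons]
    exact List.mem_cons_of_mem _ pat.start_mem_support
  rwa [Walk.support_reverse, List.mem_reverse] at hmem

/-- Voter-level lemma 1: if `a` is adjacent to `c` and lies on the path from `c`
to `b`, then a voter preferring `b` to `c` also prefers `a` to `c`. -/
private lemma voter_V1 (hT : G.IsTree) {v : Vote A} (hv : SinglePeakedOnTree G v)
    {c a b : A} (hca : G.Adj c a) (hbc : b ≠ c)
    {pcb : G.Walk c b} (hpcb : pcb.IsPath) (ha : a ∈ pcb.support)
    (h : v b < v c) : v a < v c := by
  obtain ⟨w⟩ := hT.isConnected.preconnected (top v) b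
  have hptb := w.bypass_isPath
  have hnc : c ∉ w.bypass.support := by
    intro hc
    exact absurd (hv c b (Ne.symm hbc) ⟨w.bypass, hptb, hc⟩) (lt_asymm h)
  obtain ⟨w2⟩ := hT.isConnected.preconnected (top v) c
  have hmem := tree_F1 hT hca hpcb ha hnc w2.bypass_isPath
  exact hv a c hca.ne' ⟨w2.bypass, w2.bypass_isPath, hmem⟩

/-- Voter-level lemma 2: if `a` is adjacent to `c` and lies on the path from `c`
to `b`, then a voter preferring `b` to `a` also prefers `b` to `c`. -/
private lemma voter_V2 (hT : G.IsTree) {v : Vote A} (hv : SinglePeakedOnTree G v)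
    {c a b : A} (hca : G.Adj c a) (hab : a ≠ b)
    {pcb : G.Walk c b} (hpcb : pcb.IsPath) (ha : a ∈ pcb.support)
    (h : v b < v a) : v b < v c := by
  obtain ⟨w⟩ := hT.isConnected.preconnected (top v) b
  have hptb := w.bypass_isPath
  have hna : a ∉ w.bypass.support := by
    intro hc
    exact absurd (hv a b hab ⟨w.bypass, hptb, hc⟩) (lt_asymm h)
  obtain ⟨w2⟩ := hT.isConnected.preconnected (top v) c
  have hmem := tree_F2 hT hpcb ha hna w2.bypass_isPath
  exact lt_trans h (hv a c hca.ne' ⟨w2.bypass, w2.bypass_isPath, hmem⟩)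

/-- The counts of voters preferring `x` to `y` and `y` to `x` sum to `n`. -/
private lemma count_sum {n : ℕ} (P : Fin n → Vote A) {x y : A} (hxy : x ≠ y) :
    (Finset.univ.filter fun i => P i x < P i y).card +
    (Finset.univ.filter fun i => P i y < P i x).card = n := by
  classical
  have hiff : ∀ i : Fin n, (P i y < P i x) ↔ ¬ (P i x < P i y) := by
    intro i
    constructor
    · exact fun h => lt_asymm h
    · intro h
      refine (not_lt.mp h).lt_of_ne ?_
      intro he
      exact hxy ((P i).injective he.symm)
  have : (Finset.univ.filter fun i => P i y < P i x)
      = Finset.univ.filter fun i => ¬ (P i x < P i y) := by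
    apply Finset.filter_congr
    intro i _
    exact hiff i
  rw [this, Finset.card_filter_add_card_filter_not, Finset.card_univ, Fintype.card_fin]

/-- With an odd number of voters, the majority relation is total. -/
private lemma maj_total {n : ℕ} (hodd : Odd n) (P : Fin n → Vote A) {x y : A} (hxy : x ≠ y) :
    strictMaj P x y ∨ strictMaj P y x := by
  have hs := count_sum P hxy
  obtain ⟨k, hk⟩ := hodd
  unfold strictMaj
  omega

/-- Arithmetic step: if at most as many voters prefer `z` to `x` as prefer `y` to
`x`, and `x` majority-beats `y`, then `x` majority-beats `z`. -/
private lemma maj_of_count_le {n : ℕ} (P : Fin n → Vote A) {x y z : A}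
    (hyx : y ≠ x) (hzx : z ≠ x)
    (hsub : (Finset.univ.filter fun i => P i z < P i x).card ≤
            (Finset.univ.filter fun i => P i y < P i x).card)
    (hmaj : strictMaj P x y) : strictMaj P x z := by
  have h1 := count_sum P (Ne.symm hyx)
  have h2 := count_sum P (Ne.symm hzx)
  unfold strictMaj at *
  omega

private lemma strictMaj_irrefl {n : ℕ} (P : Fin n → Vote A) (x : A) :
    ¬ strictMaj P x x := lt_irrefl _

/-- A vertex beating all of its tree-neighbors beats everyone. -/
private lemma source_is_condorcet {n : ℕ} (hT : G.IsTree) (P : Fin n → Vote A)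
    (hsp : ∀ i, SinglePeakedOnTree G (P i)) {c : A}
    (hc : ∀ b : A, G.Adj c b → strictMaj P c b) : StrongCondorcetWinner P c := by
  intro b hbc
  obtain ⟨w⟩ := hT.isConnected.preconnected c b
  set p := w.bypass with hpdef
  have hpp : p.IsPath := w.bypass_isPath
  have hnil : ¬ p.Nil := SimpleGraph.Walk.not_nil_of_ne (Ne.symm hbc)
  set a := p.getVert 1 with hadef
  have hca : G.Adj c a := p.adj_snd hnil
  have hmem : a ∈ p.support := by
    rw [← p.cons_support_tail hnil]
    exact List.mem_cons_of_mem _ (Walk.start_mem_support _)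
  have hmaja : strictMaj P c a := hc a hca
  by_cases hab : a = b
  · rwa [hab] at hmaja
  · have hsub : (Finset.univ.filter fun i => P i b < P i c).card ≤
        (Finset.univ.filter fun i => P i a < P i c).card := by
      apply Finset.card_le_card
      intro i hi
      rw [Finset.mem_filter] at hi ⊢
      exact ⟨hi.1, voter_V1 hT (hsp i) hca hbc hpp hmem hi.2⟩
    exact maj_of_count_le P hca.ne' hbc hsub hmaja

end Aux

/-- If a profile with an odd number of voters is single-peaked on a tree `G`,
then it has a Condorcet winner; specifically, orienting the edges of `G` by the
majority preference, any source vertex (a vertex that majority-beats all its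
neighbors) is a Condorcet winner, and such a vertex exists. -/
theorem condorcet_winner_of_singlePeaked_on_tree {n : ℕ} (hodd : Odd n)
    (G : SimpleGraph A) (hT : G.IsTree)
    (P : Fin n → Vote A) (hsp : ∀ i, SinglePeakedOnTree G (P i)) :
    (∃ c : A, StrongCondorcetWinner P c) ∧
    ∀ c : A, (∀ b : A, G.Adj c b → strictMaj P c b) → StrongCondorcetWinner P c := by
  classical
  constructor
  · -- existence: take a vertex maximizing the number of alternatives it beats
    obtain ⟨c, -, hmax⟩ := Finset.exists_max_image Finset.univ
      (fun x => (Finset.univ.filter fun y => strictMaj P x y).card) Finset.univ_nonempty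
    refine ⟨c, source_is_condorcet hT P hsp ?_⟩
    intro b0 hadj
    by_contra hnb
    have hb0c : strictMaj P b0 c := by
      rcases maj_total hodd P hadj.ne with h | h
      · exact absurd h hnb
      · exact h
    -- everything beaten by c is beaten by b0
    have hss : (Finset.univ.filter fun y => strictMaj P c y) ⊂
        (Finset.univ.filter fun y => strictMaj P b0 y) := by
      rw [Finset.ssubset_iff_of_subset ?hsub]
      case hsub =>
        intro y hy
        rw [Finset.mem_filter] at hy ⊢
        have hcy : strictMaj P c y := hy.2
        refine ⟨Finset.mem_univ _, ?_⟩
        have hyc : y ≠ c := fun h => strictMaj_irrefl P c (h ▸ hcy)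
        have hyb0 : y ≠ b0 := fun h => hnb (h ▸ hcy)
        obtain ⟨w⟩ := hT.isConnected.preconnected c y
        have hpp : w.bypass.IsPath := w.bypass_isPath
        by_cases hmem : b0 ∈ w.bypass.support
        · -- b0 between c and y : use V2
          have hsub : (Finset.univ.filter fun i => P i y < P i b0).card ≤
              (Finset.univ.filter fun i => P i y < P i c).card := by
            apply Finset.card_le_card
            intro i hi
            rw [Finset.mem_filter] at hi ⊢
            exact ⟨hi.1, voter_V2 hT (hsp i) hadj (Ne.symm hyb0) hpp hmem hi.2⟩
          -- from strictMaj c y and the count inequality, get strictMaj b0 y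
          have h1 := count_sum P hyc
          have h2 := count_sum P hyb0
          have hcy' := hcy
          unfold strictMaj at hcy' ⊢
          omega
        · -- c between b0 and y : use V1
          have hpath : (SimpleGraph.Walk.cons hadj.symm w.bypass).IsPath :=
            SimpleGraph.Walk.IsPath.cons hpp hmem
          have hcmem : c ∈ (SimpleGraph.Walk.cons hadj.symm w.bypass).support := by
            rw [SimpleGraph.Walk.support_cons]
            exact List.mem_cons_of_mem _ (SimpleGraph.Walk.start_mem_support _)
          have hsub : (Finset.univ.filter fun i => P i y < P i b0).card ≤
              (Finset.univ.filter fun i => P i c < P i b0).card := by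
            apply Finset.card_le_card
            intro i hi
            rw [Finset.mem_filter] at hi ⊢
            exact ⟨hi.1, voter_V1 hT (hsp i) hadj.symm hyb0 hpath hcmem hi.2⟩
          exact maj_of_count_le P hadj.ne hyb0 hsub hb0c
      · exact ⟨c, Finset.mem_filter.mpr ⟨Finset.mem_univ _, hb0c⟩,
          fun hmem => strictMaj_irrefl P c (Finset.mem_filter.mp hmem).2⟩
    exact absurd (hmax b0 (Finset.mem_univ _)) (not_le.mpr (Finset.card_lt_card hss))
  · intro c hc
    exact source_is_condorcet hT P hsp hc
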